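/- Let abc be a triple of distinct vertices in set A, and B a disjoint set of vertices, in a red-blue colored complete 3-uniform hypergraph, such that each of the blue link graphs G_a, G_b, G_c of a, b, c in B (where xy is an edge of G_v iff xyv is blue) satisfies e(G_v) ≥ (29/30)·C(|B|,2) for v ∈ {a,b,c}, and |B| is sufficiently large. If the triple abc is blue, then the coloring contains a blue copy of the Fano plane. -/

import Mathlib

open Finset

def fanoLines : Finset (Finset (Fin 7)) :=
  {({0,1,2} : Finset (Fin 7)), {0,3,4}, {0,5,6}, {1,3,5}, {1,4,6}, {2,3,6}, {2,4,5}}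

lemma inj7 {α : Type*} {a b c w x y z : α}
    (hab : a ≠ b) (hac : a ≠ c) (haw : a ≠ w) (hax : a ≠ x) (hay : a ≠ y) (haz : a ≠ z)
    (hbc : b ≠ c) (hbw : b ≠ w) (hbx : b ≠ x) (hby : b ≠ y) (hbz : b ≠ z)
    (hcw : c ≠ w) (hcx : c ≠ x) (hcy : c ≠ y) (hcz : c ≠ z)
    (hwx : w ≠ x) (hwy : w ≠ y) (hwz : w ≠ z) (hxy : x ≠ y) (hxz : x ≠ z) (hyz : y ≠ z) :
    Function.Injective ![a, b, c, w, x, y, z] := by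
  have h0 : Function.Injective (![] : Fin 0 → α) := fun i j _ => Subsingleton.elim i j
  intro i j hij
  fin_cases i <;> fin_cases j <;> simp [
    hab, hac, haw, hax, hay, haz, hbc, hbw, hbx, hby, hbz, hcw, hcx, hcy, hcz,
    hwx, hwy, hwz, hxy, hxz, hyz, hab.symm, hac.symm, haw.symm, hax.symm, hay.symm, haz.symm,
    hbc.symm, hbw.symm, hbx.symm, hby.symm, hbz.symm, hcw.symm, hcx.symm, hcy.symm, hcz.symm,
    hwx.symm, hwy.symm, hwz.symm, hxy.symm, hxz.symm, hyz.symm] at hij ⊢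

def HasBlueFano {α : Type*} [DecidableEq α] (blue : Finset α → Prop) : Prop :=
  ∃ f : Fin 7 → α, Function.Injective f ∧ ∀ L ∈ fanoLines, blue (L.image f)

/-- If `a, b, c` are distinct vertices outside a sufficiently large set `B`, each of their blue
link graphs in `B` has at least `(29/30)·C(|B|,2)` edges, and the triple `abc` is blue, then
the coloring contains a blue copy of the Fano plane. -/
theorem blue_fano_from_dense_blue_links :
    ∃ n0 : ℕ, ∀ (α : Type) [DecidableEq α] (red : Finset α → Prop) [DecidablePred red]
      (a b c : α) (B : Finset α),
      [a, b, c].Nodup → a ∉ B → b ∉ B → c ∉ B → n0 ≤ B.card →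
      (∀ v ∈ ({a, b, c} : Finset α),
        (29 / 30 : ℝ) * (B.card.choose 2 : ℝ) ≤
          (((B.powersetCard 2).filter fun p => ¬ red (insert v p)).card : ℝ)) →
      ¬ red {a, b, c} →
      HasBlueFano (fun e => ¬ red e) := by
  classical
  refine ⟨4, ?_⟩
  intro α _ red _ a b c B hnodup haB hbB hcB hn hlinks habc
  simp only [List.nodup_cons, List.mem_cons, List.mem_singleton, List.nodup_nil] at hnodup
  have hab : a ≠ b := fun h => hnodup.1 (Or.inl h)
  have hac : a ≠ c := fun h => hnodup.1 (Or.inr (Or.inl h))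
  have hbc : b ≠ c := fun h => hnodup.2.1 (Or.inl h)
  set n := B.card with hncard
  set P := B.powersetCard 2 with hP
  have hcardP : P.card = n.choose 2 := card_powersetCard 2 B
  -- bad pairs for each vertex
  have hv : ∀ v ∈ ({a, b, c} : Finset α),
      ((P.filter fun p => red (insert v p)).card : ℝ) ≤ (1/30) * (n.choose 2 : ℝ) := by
    intro v hvm
    have h1 := hlinks v hvm
    have h2 : (P.filter fun p => red (insert v p)).card
        + (P.filter fun p => ¬ red (insert v p)).card = P.card :=
      card_filter_add_card_filter_not _
    have h3 : ((P.filter fun p => red (insert v p)).card : ℝ)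
        = (n.choose 2 : ℝ) - ((P.filter fun p => ¬ red (insert v p)).card : ℝ) := by
      rw [← hcardP]
      push_cast [← h2]
      ring
    rw [h3]
    linarith
  set Bad := P.filter (fun p => red (insert a p) ∨ red (insert b p) ∨ red (insert c p))
    with hBadDef
  have hBadcard : (Bad.card : ℝ) ≤ (1/10) * (n.choose 2 : ℝ) := by
    have hsub : Bad ⊆ (P.filter fun p => red (insert a p))
        ∪ ((P.filter fun p => red (insert b p)) ∪ (P.filter fun p => red (insert c p))) := by
      intro p hp
      simp only [hBadDef, mem_filter, mem_union] at hp ⊢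
      tauto
    have := card_le_card hsub
    have h2 := card_union_le ((P.filter fun p => red (insert b p)))
      (P.filter fun p => red (insert c p))
    have h1 := card_union_le ((P.filter fun p => red (insert a p)))
      (((P.filter fun p => red (insert b p)) ∪ (P.filter fun p => red (insert c p))))
    have ha' := hv a (by simp)
    have hb' := hv b (by simp)
    have hc' := hv c (by simp)
    have hnat : Bad.card ≤ (P.filter fun p => red (insert a p)).card
        + (P.filter fun p => red (insert b p)).card
        + (P.filter fun p => red (insert c p)).card := by omega
    have : (Bad.card : ℝ) ≤ ((P.filter fun p => red (insert a p)).card : ℝ)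
        + ((P.filter fun p => red (insert b p)).card : ℝ)
        + ((P.filter fun p => red (insert c p)).card : ℝ) := by exact_mod_cast hnat
    linarith
  -- each bad pair is contained in at most C(n-2,2) quadruples
  have hext : ∀ p ∈ Bad, ((B.powersetCard 4).filter fun Q => p ⊆ Q).card ≤ (n-2).choose 2 := by
    intro p hp
    have hpB : p ⊆ B ∧ p.card = 2 := by
      have := (mem_filter.mp hp).1
      rwa [hP, mem_powersetCard] at this
    have : ((B.powersetCard 4).filter fun Q => p ⊆ Q).card ≤ ((B \ p).powersetCard 2).card := by
      apply card_le_card_of_injOn (fun Q => Q \ p)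
      · intro Q hQ
        rw [mem_coe, mem_filter, mem_powersetCard] at hQ
        rw [mem_coe, mem_powersetCard]
        constructor
        · exact sdiff_subset_sdiff hQ.1.1 le_rfl
        · rw [card_sdiff_of_subset hQ.2, hQ.1.2, hpB.2]
      · intro Q1 h1 Q2 h2 heq
        rw [mem_coe, mem_filter] at h1 h2
        have heq' : Q1 \ p = Q2 \ p := heq
        have e1 : Q1 = Q1 \ p ∪ p := (sdiff_union_of_subset h1.2).symm
        have e2 : Q2 = Q2 \ p ∪ p := (sdiff_union_of_subset h2.2).symm
        rw [e1, e2, heq']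
    rwa [card_powersetCard, card_sdiff_of_subset hpB.1, hpB.2] at this
  -- count quadruples containing a bad pair
  set T := (B.powersetCard 4).filter (fun Q => ∃ p ∈ Bad, p ⊆ Q) with hT
  have hTsub : T ⊆ Bad.biUnion (fun p => (B.powersetCard 4).filter fun Q => p ⊆ Q) := by
    intro Q hQ
    rw [hT, mem_filter] at hQ
    obtain ⟨p, hp, hpQ⟩ := hQ.2
    rw [mem_biUnion]
    exact ⟨p, hp, mem_filter.mpr ⟨hQ.1, hpQ⟩⟩
  have hTcard : (T.card : ℝ) ≤ (Bad.card : ℝ) * ((n-2).choose 2 : ℝ) := by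
    have h1 : T.card ≤ Bad.card * (n-2).choose 2 := by
      calc T.card ≤ (Bad.biUnion (fun p => (B.powersetCard 4).filter fun Q => p ⊆ Q)).card :=
            card_le_card hTsub
        _ ≤ ∑ p ∈ Bad, ((B.powersetCard 4).filter fun Q => p ⊆ Q).card := card_biUnion_le
        _ ≤ ∑ _p ∈ Bad, (n-2).choose 2 := Finset.sum_le_sum hext
        _ = Bad.card * (n-2).choose 2 := by rw [Finset.sum_const, smul_eq_mul]
    exact_mod_cast h1
  -- identity : C(n,4) * 6 = C(n,2) * C(n-2,2)
  have hid : (n.choose 4) * 6 = n.choose 2 * (n-2).choose 2 := by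
    have h := Nat.choose_mul (n := n) (k := 4) (s := 2) (by norm_num)
    rw [show Nat.choose 4 2 = 6 from rfl] at h
    exact h
  have hpos : 0 < n.choose 4 := Nat.choose_pos hn
  have hTlt : T.card < (B.powersetCard 4).card := by
    rw [card_powersetCard, ← hncard]
    have : (T.card : ℝ) < (n.choose 4 : ℝ) := by
      have h6' : n.choose 2 * (n-2).choose 2 = 6 * n.choose 4 := by omega
      have h6 : ((n.choose 2 : ℕ) : ℝ) * ((n-2).choose 2 : ℝ) = 6 * (n.choose 4 : ℝ) := by
        exact_mod_cast h6'
      calc (T.card : ℝ) ≤ (Bad.card : ℝ) * ((n-2).choose 2 : ℝ) := hTcard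
        _ ≤ (1/10) * (n.choose 2 : ℝ) * ((n-2).choose 2 : ℝ) := by
            apply mul_le_mul_of_nonneg_right hBadcard (by positivity)
        _ = (6/10) * (n.choose 4 : ℝ) := by rw [mul_assoc, h6]; ring
        _ < (n.choose 4 : ℝ) := by
            have : (0:ℝ) < (n.choose 4 : ℝ) := by exact_mod_cast hpos
            linarith
    exact_mod_cast this
  -- find a good quadruple
  obtain ⟨Q, hQmem, hQT⟩ : ∃ Q ∈ B.powersetCard 4, Q ∉ T := by
    by_contra h
    push_neg at h
    exact absurd (card_le_card h) (not_le.mpr hTlt)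
  rw [mem_powersetCard] at hQmem
  have hQgood : ∀ u ∈ Q, ∀ v ∈ Q, u ≠ v → ∀ w ∈ ({a,b,c} : Finset α), ¬ red (insert w {u, v}) := by
    intro u hu v hvv huv w hw
    have hpair : ({u, v} : Finset α) ∈ P := by
      rw [hP, mem_powersetCard]
      refine ⟨?_, card_pair huv⟩
      intro t ht
      simp only [mem_insert, mem_singleton] at ht
      rcases ht with rfl | rfl
      exacts [hQmem.1 hu, hQmem.1 hvv]
    have hnotbad : ({u, v} : Finset α) ∉ Bad := by
      intro hbad
      apply hQT
      rw [hT, mem_filter, mem_powersetCard]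
      refine ⟨hQmem, {u, v}, hbad, ?_⟩
      intro x hx
      simp only [mem_insert, mem_singleton] at hx
      rcases hx with rfl | rfl
      exacts [hu, hvv]
    simp only [hBadDef, mem_filter, hpair, true_and, not_or] at hnotbad
    simp only [mem_insert, mem_singleton] at hw
    rcases hw with rfl | rfl | rfl
    exacts [hnotbad.1, hnotbad.2.1, hnotbad.2.2]
  -- extract four distinct elements
  obtain ⟨w, hwQ⟩ : Q.Nonempty := card_pos.mp (by rw [hQmem.2]; norm_num)
  have h3 : (Q.erase w).card = 3 := by rw [card_erase_of_mem hwQ, hQmem.2]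
  obtain ⟨x, y, z, hxy, hxz, hyz, hE⟩ := card_eq_three.mp h3
  have hxQ : x ∈ Q := mem_of_mem_erase (hE ▸ (by simp : x ∈ ({x,y,z} : Finset α)))
  have hyQ : y ∈ Q := mem_of_mem_erase (hE ▸ (by simp : y ∈ ({x,y,z} : Finset α)))
  have hzQ : z ∈ Q := mem_of_mem_erase (hE ▸ (by simp : z ∈ ({x,y,z} : Finset α)))
  have hwx : w ≠ x := fun h => (ne_of_mem_erase (hE ▸ (by simp : x ∈ ({x,y,z} : Finset α)))) h.symm
  have hwy : w ≠ y := fun h => (ne_of_mem_erase (hE ▸ (by simp : y ∈ ({x,y,z} : Finset α)))) h.symm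
  have hwz : w ≠ z := fun h => (ne_of_mem_erase (hE ▸ (by simp : z ∈ ({x,y,z} : Finset α)))) h.symm
  have hwB : w ∈ B := hQmem.1 hwQ
  have hxB : x ∈ B := hQmem.1 hxQ
  have hyB : y ∈ B := hQmem.1 hyQ
  have hzB : z ∈ B := hQmem.1 hzQ
  have memB : ∀ t ∈ ({w, x, y, z} : Finset α), t ∈ B := by
    intro t ht
    simp only [mem_insert, mem_singleton] at ht
    rcases ht with rfl | rfl | rfl | rfl
    exacts [hwB, hxB, hyB, hzB]
  refine ⟨![a, b, c, w, x, y, z], ?_, ?_⟩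
  · exact inj7 hab hac
      (fun h => haB (h ▸ hwB)) (fun h => haB (h ▸ hxB)) (fun h => haB (h ▸ hyB))
      (fun h => haB (h ▸ hzB)) hbc
      (fun h => hbB (h ▸ hwB)) (fun h => hbB (h ▸ hxB)) (fun h => hbB (h ▸ hyB))
      (fun h => hbB (h ▸ hzB))
      (fun h => hcB (h ▸ hwB)) (fun h => hcB (h ▸ hxB)) (fun h => hcB (h ▸ hyB))
      (fun h => hcB (h ▸ hzB)) hwx hwy hwz hxy hxz hyz
  · intro L hL
    simp only [fanoLines, mem_insert, mem_singleton] at hL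
    rcases hL with rfl | rfl | rfl | rfl | rfl | rfl | rfl <;>
      rw [show ∀ (u v t : Fin 7), ({u, v, t} : Finset (Fin 7)) = insert u (insert v {t})
        from fun _ _ _ => rfl] <;>
      rw [image_insert, image_insert, image_singleton]
    · exact habc
    · exact hQgood w hwQ x hxQ hwx a (by simp)
    · exact hQgood y hyQ z hzQ hyz a (by simp)
    · exact hQgood w hwQ y hyQ hwy b (by simp)
    · exact hQgood x hxQ z hzQ hxz b (by simp)
    · exact hQgood w hwQ z hzQ hwz c (by simp)
    · exact hQgood x hxQ y hyQ hxy c (by simp)
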